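/- The rank of the 6×18 controllability matrix [B, AB, A²B, …, A⁵B] for the equatorial-orbit magnetic attitude control system is strictly less than 6; hence the pair (A,B) is not controllable. -/

import Mathlib

theorem equatorial_not_controllable
    (f41 f52 f63 f46 f64 b2 J11 J33 : ℝ)
    (A : Matrix (Fin 6) (Fin 6) ℝ)
    (B : Matrix (Fin 6) (Fin 3) ℝ)
    (hA : A = !![0, 0, 0, (1:ℝ)/2, 0, 0;
                 0, 0, 0, 0, (1:ℝ)/2, 0;
                 0, 0, 0, 0, 0, (1:ℝ)/2;
                 f41, 0, 0, 0, 0, f46;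
                 0, f52, 0, 0, 0, 0;
                 0, 0, f63, f64, 0, 0])
    (hB : B = !![0, 0, 0;
                 0, 0, 0;
                 0, 0, 0;
                 0, 0, -b2 / J11;
                 0, 0, 0;
                 b2 / J33, 0, 0])
    (ctrb : Matrix (Fin 6) (Fin 18) ℝ)
    (hctrb : ∀ (i : Fin 6) (j : Fin 18),
      ctrb i j = (A ^ (j.val / 3) * B) i ⟨j.val % 3, by omega⟩) :
    ctrb.rank < 6 := by
  -- rows 1 and 4 of A^k * B vanish
  have key : ∀ k : ℕ, ∀ j : Fin 3,
      (A ^ k * B) 1 j = 0 ∧ (A ^ k * B) 4 j = 0 := by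
    intro k
    induction k with
    | zero =>
      intro j
      simp only [pow_zero, Matrix.one_mul, hB]
      fin_cases j <;> simp [Matrix.cons_val_zero, Matrix.cons_val_one, Matrix.head_cons,
        Matrix.vecHead, Matrix.vecTail]
    | succ n ih =>
      intro j
      have h : A ^ (n + 1) * B = A * (A ^ n * B) := by
        rw [pow_succ', Matrix.mul_assoc]
      have e1 : ∀ l : Fin 6, A 1 l = ![0, 0, 0, 0, (1:ℝ)/2, 0] l := by
        intro l; rw [hA]; fin_cases l <;> rfl
      have e4 : ∀ l : Fin 6, A 4 l = ![0, f52, 0, 0, 0, 0] l := by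
        intro l; rw [hA]; fin_cases l <;> rfl
      constructor
      · rw [h, Matrix.mul_apply, Fin.sum_univ_six, e1 0, e1 1, e1 2, e1 3, e1 4, e1 5]
        have := (ih j).2
        simp [Matrix.vecHead, Matrix.vecTail, this]
      · rw [h, Matrix.mul_apply, Fin.sum_univ_six, e4 0, e4 1, e4 2, e4 3, e4 4, e4 5]
        have := (ih j).1
        simp [Matrix.vecHead, Matrix.vecTail, this]
  have hrow : ∀ j : Fin 18, ctrb 1 j = 0 := by
    intro j
    rw [hctrb]
    exact (key _ _).1
  -- range of mulVecLin is contained in {x | x 1 = 0}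
  have hrange : LinearMap.range ctrb.mulVecLin ≤
      LinearMap.ker (LinearMap.proj (1 : Fin 6) : (Fin 6 → ℝ) →ₗ[ℝ] ℝ) := by
    rintro x ⟨v, rfl⟩
    simp only [LinearMap.mem_ker, LinearMap.proj_apply, Matrix.mulVecLin_apply,
      Matrix.mulVec, dotProduct]
    exact Finset.sum_eq_zero fun i _ => by simp only [hrow i, zero_mul]
  have hne : (LinearMap.ker (LinearMap.proj (1 : Fin 6) : (Fin 6 → ℝ) →ₗ[ℝ] ℝ)) ≠ ⊤ := by
    intro h
    have : Pi.single (1 : Fin 6) (1 : ℝ) ∈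
        LinearMap.ker (LinearMap.proj (1 : Fin 6) : (Fin 6 → ℝ) →ₗ[ℝ] ℝ) := by
      rw [h]; trivial
    simp at this
  have h1 : ctrb.rank ≤ Module.finrank ℝ
      (LinearMap.ker (LinearMap.proj (1 : Fin 6) : (Fin 6 → ℝ) →ₗ[ℝ] ℝ)) :=
    Submodule.finrank_mono hrange
  have h2 := Submodule.finrank_lt (K := ℝ) (V := Fin 6 → ℝ)
    hne
  have h3 : Module.finrank ℝ (Fin 6 → ℝ) = 6 := by simp
  rw [h3] at h2
  omega
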